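/- For any unit vector v ∈ ℂ^d and 1 ≤ k ≤ d, the minimum trace distance from vv† to the convex hull of rank-one projections onto k-sparse unit vectors is at most 1 − k/d. -/

import Mathlib

open scoped BigOperators

open Finset Matrix

section Aux

variable {d : ℕ}

/-- counting subsets of size k containing a fixed set t -/
lemma count_supersets {α : Type*} [DecidableEq α] (s t : Finset α) (hts : t ⊆ s) (k : ℕ)
    (htk : t.card ≤ k) :
    ((s.powersetCard k).filter (fun S => t ⊆ S)).card
      = (s.card - t.card).choose (k - t.card) := by
  rw [← Finset.card_sdiff_of_subset hts, ← Finset.card_powersetCard (k - t.card) (s \ t)]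
  apply Finset.card_bij' (fun S _ => S \ t) (fun T _ => T ∪ t)
  · intro S hS
    simp only [mem_filter, mem_powersetCard] at hS
    simp only [mem_powersetCard]
    exact ⟨Finset.sdiff_subset_sdiff hS.1.1 le_rfl,
      by rw [Finset.card_sdiff_of_subset hS.2, hS.1.2]⟩
  · intro T hT
    simp only [mem_powersetCard] at hT
    have hTt : Disjoint T t := Finset.disjoint_of_subset_left hT.1 (Finset.sdiff_disjoint)
    simp only [mem_filter, mem_powersetCard]
    refine ⟨⟨Finset.union_subset (hT.1.trans (Finset.sdiff_subset)) hts, ?_⟩,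
      Finset.subset_union_right⟩
    rw [Finset.card_union_of_disjoint hTt, hT.2]
    omega
  · intro S hS
    simp only [mem_filter] at hS
    exact Finset.sdiff_union_of_subset hS.2
  · intro T hT
    simp only [mem_powersetCard] at hT
    have hTt : Disjoint T t := Finset.disjoint_of_subset_left hT.1 (Finset.sdiff_disjoint)
    exact Finset.union_sdiff_cancel_right hTt

lemma abs_eq_two_mul_max (a : ℝ) : |a| = 2 * max a 0 - a := by
  rcases le_or_gt 0 a with h | h
  · rw [abs_of_nonneg h, max_eq_left h]; ring
  · rw [abs_of_neg h, max_eq_right h.le]; ring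

lemma key_ineq {d : ℕ} (hd : 0 < d) (p y : Fin d → ℝ) (hp : ∀ i, 0 ≤ p i)
    (hps : ∑ i, p i = 1) :
    (∑ i, Real.sqrt (p i) * y i) ^ 2
      ≤ ∑ i, p i * y i ^ 2 + (1 - 1 / d) * ∑ i, y i ^ 2 := by
  rcases eq_or_lt_of_le (Nat.one_le_iff_ne_zero.mpr hd.ne' : 1 ≤ d) with hd1 | hd2
  · -- d = 1
    have : (d : ℝ) = 1 := by exact_mod_cast hd1.symm
    subst hd1
    have hp0 : p 0 = 1 := by simpa using hps
    simp [Fin.sum_univ_one, hp0, this]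
  · -- d ≥ 2
    set c : ℝ := 1 - 1 / d with hc
    have hdr : (2:ℝ) ≤ d := by exact_mod_cast hd2
    have hcpos : 0 < c := by
      rw [hc, sub_pos, div_lt_one (by linarith)]; linarith
    have hpc : ∀ i, 0 < p i + c := fun i => by have := hp i; linarith
    -- Cauchy-Schwarz 1
    have cs1 : (∑ i, Real.sqrt (p i) * y i) ^ 2
        ≤ (∑ i, p i / (p i + c)) * (∑ i, (p i + c) * y i ^ 2) := by
      have h := Finset.sum_mul_sq_le_sq_mul_sq Finset.univ
        (fun i => Real.sqrt (p i) / Real.sqrt (p i + c))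
        (fun i => Real.sqrt (p i + c) * y i)
      have heq : ∀ i : Fin d, Real.sqrt (p i) / Real.sqrt (p i + c)
          * (Real.sqrt (p i + c) * y i) = Real.sqrt (p i) * y i := by
        intro i
        have h0 : Real.sqrt (p i + c) ≠ 0 := by
          have := hpc i; positivity
        field_simp
      calc (∑ i, Real.sqrt (p i) * y i) ^ 2
          = (∑ i, Real.sqrt (p i) / Real.sqrt (p i + c)
              * (Real.sqrt (p i + c) * y i)) ^ 2 := by
            rw [Finset.sum_congr rfl (fun i _ => (heq i).symm)]
        _ ≤ (∑ i, (Real.sqrt (p i) / Real.sqrt (p i + c)) ^ 2)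
              * (∑ i, (Real.sqrt (p i + c) * y i) ^ 2) := h
        _ = (∑ i, p i / (p i + c)) * (∑ i, (p i + c) * y i ^ 2) := by
            congr 1
            · refine Finset.sum_congr rfl (fun i _ => ?_)
              rw [div_pow, Real.sq_sqrt (hp i), Real.sq_sqrt (hpc i).le]
            · refine Finset.sum_congr rfl (fun i _ => ?_)
              rw [mul_pow, Real.sq_sqrt (hpc i).le]
    -- Cauchy-Schwarz 2 : AM-HM
    have cs2 : (d : ℝ) ≤ ∑ i, 1 / (p i + c) := by
      have h := Finset.sum_mul_sq_le_sq_mul_sq Finset.univ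
        (fun i : Fin d => Real.sqrt (p i + c))
        (fun i => 1 / Real.sqrt (p i + c))
      have heq : ∀ i : Fin d, Real.sqrt (p i + c) * (1 / Real.sqrt (p i + c)) = 1 := by
        intro i
        have h0 : Real.sqrt (p i + c) ≠ 0 := by
          have := hpc i; positivity
        field_simp
      rw [Finset.sum_congr rfl (fun i _ => heq i)] at h
      simp only [Finset.sum_const, Finset.card_univ, Fintype.card_fin, nsmul_eq_mul,
        mul_one] at h
      have h1 : ∀ i : Fin d, (Real.sqrt (p i + c)) ^ 2 = p i + c := fun i =>
        Real.sq_sqrt (hpc i).le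
      have h2 : ∀ i : Fin d, (1 / Real.sqrt (p i + c)) ^ 2 = 1 / (p i + c) := by
        intro i; rw [div_pow, one_pow, Real.sq_sqrt (hpc i).le]
      rw [Finset.sum_congr rfl (fun i _ => h1 i), Finset.sum_congr rfl (fun i _ => h2 i)] at h
      have hsum : ∑ i, (p i + c) = (d : ℝ) := by
        rw [Finset.sum_add_distrib, hps, Finset.sum_const, Finset.card_univ, Fintype.card_fin,
          nsmul_eq_mul, hc]
        have : (d:ℝ) ≠ 0 := by positivity
        field_simp
        ring
      rw [hsum] at h
      -- h : d^2 ≤ d * ∑ 1/(p i + c)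
      have hd0 : (0:ℝ) < d := by positivity
      nlinarith [h]
    have factor1 : (∑ i, p i / (p i + c)) ≤ 1 := by
      have : ∀ i : Fin d, p i / (p i + c) = 1 - c * (1 / (p i + c)) := by
        intro i
        have h0 := (hpc i).ne'
        field_simp
        ring
      rw [Finset.sum_congr rfl (fun i _ => this i), Finset.sum_sub_distrib]
      simp only [Finset.sum_const, Finset.card_univ, Fintype.card_fin, nsmul_eq_mul, mul_one,
        ← Finset.mul_sum]
      have : (d:ℝ) * (1/d) = 1 := by field_simp
      nlinarith [cs2, hcpos]
    have hpos : 0 ≤ ∑ i, (p i + c) * y i ^ 2 :=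
      Finset.sum_nonneg fun i _ => mul_nonneg (hpc i).le (sq_nonneg _)
    calc (∑ i, Real.sqrt (p i) * y i) ^ 2
        ≤ (∑ i, p i / (p i + c)) * (∑ i, (p i + c) * y i ^ 2) := cs1
      _ ≤ 1 * (∑ i, (p i + c) * y i ^ 2) := by
          apply mul_le_mul_of_nonneg_right factor1 hpos
      _ = ∑ i, p i * y i ^ 2 + c * ∑ i, y i ^ 2 := by
          rw [one_mul, Finset.mul_sum, ← Finset.sum_add_distrib]
          exact Finset.sum_congr rfl (fun i _ => by ring)

lemma mulVec_vecMulVec (v w x : Fin d → ℂ) :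
    Matrix.vecMulVec v w *ᵥ x = (w ⬝ᵥ x) • v := by
  ext i
  simp only [Matrix.mulVec, Matrix.vecMulVec_apply, dotProduct, Pi.smul_apply,
    smul_eq_mul, Finset.sum_mul, Finset.mul_sum]
  exact Finset.sum_congr rfl fun j _ => by ring

lemma herm_M (v : Fin d → ℂ) :
    (Matrix.vecMulVec v (star v) - Matrix.diagonal (fun i => (‖v i‖^2 : ℂ))).IsHermitian := by
  apply Matrix.IsHermitian.sub
  · ext i j
    simp only [Matrix.conjTranspose_apply, Matrix.vecMulVec_apply, Pi.star_apply, star_mul',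
      star_star]
    exact mul_comm _ _
  · apply Matrix.isHermitian_diagonal_of_self_adjoint
    ext i
    simp [Pi.star_apply, ← Complex.ofReal_pow]

lemma star_mul_self_complex (z : ℂ) : star z * z = ((‖z‖^2 : ℝ) : ℂ) := by
  have h := RCLike.conj_mul z
  push_cast at h ⊢
  exact h

lemma qf_eq (v x : Fin d → ℂ) :
    star x ⬝ᵥ ((Matrix.vecMulVec v (star v) - Matrix.diagonal (fun i => (‖v i‖^2 : ℂ))) *ᵥ x)
      = ((‖star v ⬝ᵥ x‖^2 - ∑ i, ‖v i‖^2 * ‖x i‖^2 : ℝ) : ℂ) := by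
  rw [Matrix.sub_mulVec, dotProduct_sub, mulVec_vecMulVec, dotProduct_smul]
  have h1 : star x ⬝ᵥ v = star (star v ⬝ᵥ x) := by
    simp only [dotProduct, star_sum, Pi.star_apply, star_mul', star_star]
    exact Finset.sum_congr rfl fun j _ => by ring
  have h2 : star x ⬝ᵥ (Matrix.diagonal (fun i => (‖v i‖^2 : ℂ)) *ᵥ x)
      = ((∑ i, ‖v i‖^2 * ‖x i‖^2 : ℝ) : ℂ) := by
    simp only [dotProduct, Matrix.mulVec_diagonal, Pi.star_apply]
    push_cast
    refine Finset.sum_congr rfl fun j _ => ?_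
    have : star (x j) * ((‖v j‖:ℂ)^2 * x j) = (‖v j‖:ℂ)^2 * (star (x j) * x j) := by ring
    rw [this, star_mul_self_complex]
    push_cast
    ring
  rw [h2, smul_eq_mul, h1]
  have h3 : star (star v ⬝ᵥ x) * (star v ⬝ᵥ x) = ((‖star v ⬝ᵥ x‖^2 : ℝ) : ℂ) :=
    star_mul_self_complex _
  rw [mul_comm, h3]
  push_cast
  ring

lemma sum_eig_eq_trace (A : Matrix (Fin d) (Fin d) ℂ) (hA : A.IsHermitian) :
    ((∑ i, hA.eigenvalues i : ℝ) : ℂ) = A.trace := by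
  rw [hA.trace_eq_sum_eigenvalues, Complex.ofReal_sum]
  rfl

lemma eig_bound (d k : ℕ) (hk : 1 ≤ k) (hkd : k ≤ d) (v : Fin d → ℂ)
    (hv : ∑ i, ‖v i‖ ^ 2 = 1) (mu : ℝ) (hmu : 0 ≤ mu)
    (hmuc : mu * (1 - 1 / d) = 1 - (k : ℝ) / d)
    (D : Matrix (Fin d) (Fin d) ℂ)
    (hDdef : D = (mu : ℂ) • (Matrix.vecMulVec v (star v)
      - Matrix.diagonal fun i => (‖v i‖ ^ 2 : ℂ)))
    (h : D.IsHermitian) :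
    (1 / 2) * ∑ i, |h.eigenvalues i| ≤ 1 - (k : ℝ) / d := by
  have hd : 0 < d := lt_of_lt_of_le hk hkd
  set M := Matrix.vecMulVec v (star v) - Matrix.diagonal fun i => (‖v i‖ ^ 2 : ℂ) with hM
  set c' : ℝ := 1 - (k : ℝ) / d with hc'
  have hc'0 : 0 ≤ c' := by
    rw [hc', sub_nonneg, div_le_one (by positivity)]
    exact_mod_cast hkd
  -- quadratic form of D
  have hQF : ∀ x : Fin d → ℂ, star x ⬝ᵥ (D *ᵥ x)
      = ((mu * (‖star v ⬝ᵥ x‖ ^ 2 - ∑ i, ‖v i‖ ^ 2 * ‖x i‖ ^ 2) : ℝ) : ℂ) := by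
    intro x
    rw [hDdef, Matrix.smul_mulVec, dotProduct_smul, smul_eq_mul, qf_eq]
    push_cast
    ring
  -- QF bound
  have hQFle : ∀ x : Fin d → ℂ,
      ‖star v ⬝ᵥ x‖ ^ 2 - ∑ i, ‖v i‖ ^ 2 * ‖x i‖ ^ 2 ≤ (1 - 1 / d) * ∑ i, ‖x i‖ ^ 2 := by
    intro x
    have h1 : ‖star v ⬝ᵥ x‖ ≤ ∑ i, Real.sqrt (‖v i‖ ^ 2) * ‖x i‖ := by
      refine (norm_sum_le _ _).trans ?_
      refine Finset.sum_le_sum fun i _ => ?_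
      rw [Real.sqrt_sq (norm_nonneg _)]
      simp [norm_mul]
    have h2 : ‖star v ⬝ᵥ x‖ ^ 2 ≤ (∑ i, Real.sqrt (‖v i‖ ^ 2) * ‖x i‖) ^ 2 :=
      pow_le_pow_left₀ (norm_nonneg _) h1 2
    have h3 := key_ineq hd (fun i => ‖v i‖ ^ 2) (fun i => ‖x i‖) (fun i => sq_nonneg _) hv
    have h4 : ∑ i, ‖v i‖ ^ 2 * ‖x i‖ ^ 2 = ∑ i, ‖v i‖ ^ 2 * (fun i => ‖x i‖) i ^ 2 := rfl
    linarith [h2.trans h3]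
  -- eigenvector data
  set u : Fin d → Fin d → ℂ := fun i => ⇑(h.eigenvectorBasis i) with hu
  set f : Fin d → ℝ := h.eigenvalues with hf
  have hfeq : ∀ i, f i = mu * (‖star v ⬝ᵥ u i‖ ^ 2 - ∑ a, ‖v a‖ ^ 2 * ‖u i a‖ ^ 2) := by
    intro i
    have e := h.eigenvalues_eq i
    rw [hf, e, hQF]
    simp only [RCLike.re_to_complex, Complex.ofReal_re]
    rfl
  have hnorm_u : ∀ i, ∑ a, ‖u i a‖ ^ 2 = 1 := by
    intro i
    have h1 : ‖h.eigenvectorBasis i‖ = 1 := h.eigenvectorBasis.orthonormal.1 i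
    have h2 := EuclideanSpace.norm_eq (h.eigenvectorBasis i)
    have hnn : (0:ℝ) ≤ ∑ a, ‖u i a‖ ^ 2 :=
      Finset.sum_nonneg fun a _ => sq_nonneg _
    have hnn' : (0:ℝ) ≤ ∑ a, ‖h.eigenvectorBasis i a‖ ^ 2 :=
      Finset.sum_nonneg fun a _ => sq_nonneg _
    have h4 : ‖h.eigenvectorBasis i‖ ^ 2 = ∑ a, ‖h.eigenvectorBasis i a‖ ^ 2 := by
      rw [h2, Real.sq_sqrt hnn']
    rw [h1, one_pow] at h4
    exact h4.symm
  -- each eigenvalue ≤ c'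
  have hfle : ∀ i, f i ≤ c' := by
    intro i
    rw [hfeq i, ← hmuc]
    have := hQFle (u i)
    rw [hnorm_u i, mul_one] at this
    exact mul_le_mul_of_nonneg_left this hmu
  -- at most one positive eigenvalue
  have hsingle : ∀ i j, i ≠ j → 0 < f i → 0 < f j → False := by
    intro i j hij hfi hfj
    have hQi : 0 < ‖star v ⬝ᵥ u i‖ ^ 2 - ∑ a, ‖v a‖ ^ 2 * ‖u i a‖ ^ 2 := by
      rw [hfeq i] at hfi; nlinarith [hfi, hmu]
    have hQj : 0 < ‖star v ⬝ᵥ u j‖ ^ 2 - ∑ a, ‖v a‖ ^ 2 * ‖u j a‖ ^ 2 := by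
      rw [hfeq j] at hfj; nlinarith [hfj, hmu]
    have hsi : (0:ℝ) ≤ ∑ a, ‖v a‖ ^ 2 * ‖u i a‖ ^ 2 :=
      Finset.sum_nonneg fun a _ => mul_nonneg (sq_nonneg _) (sq_nonneg _)
    have hsj : (0:ℝ) ≤ ∑ a, ‖v a‖ ^ 2 * ‖u j a‖ ^ 2 :=
      Finset.sum_nonneg fun a _ => mul_nonneg (sq_nonneg _) (sq_nonneg _)
    have hzi : star v ⬝ᵥ u i ≠ 0 := by
      intro h0; rw [h0, norm_zero] at hQi; nlinarith
    have hzj : star v ⬝ᵥ u j ≠ 0 := by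
      intro h0; rw [h0, norm_zero] at hQj; nlinarith
    set zi : ℂ := star v ⬝ᵥ u i with hzidef
    set zj : ℂ := star v ⬝ᵥ u j with hzjdef
    set x : Fin d → ℂ := zj • u i - zi • u j with hx
    -- orthogonal to v
    have hxv : star v ⬝ᵥ x = 0 := by
      rw [hx, dotProduct_sub, dotProduct_smul, dotProduct_smul]
      simp only [smul_eq_mul, ← hzidef, ← hzjdef]
      ring
    -- QF x ≤ 0
    have hneg : (star x ⬝ᵥ (D *ᵥ x)).re ≤ 0 := by
      rw [hQF x, hxv]
      simp only [norm_zero, Complex.ofReal_re]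
      have : (0:ℝ) ≤ ∑ a, ‖v a‖ ^ 2 * ‖x a‖ ^ 2 :=
        Finset.sum_nonneg fun a _ => mul_nonneg (sq_nonneg _) (sq_nonneg _)
      nlinarith
    -- orthonormality
    have hON : ∀ a b : Fin d, star (u a) ⬝ᵥ u b = if a = b then 1 else 0 := by
      intro a b
      have := orthonormal_iff_ite.mp h.eigenvectorBasis.orthonormal a b
      rw [← this, EuclideanSpace.inner_eq_star_dotProduct]
      exact dotProduct_comm _ _
    -- D on eigenvectors, complexified
    have hDu : ∀ a, D *ᵥ u a = ((f a : ℝ) : ℂ) • u a := by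
      intro a
      have e := h.mulVec_eigenvectorBasis a
      have : D *ᵥ u a = (f a) • u a := e
      rw [this]
      ext b
      simp [Complex.real_smul]
    -- positive value
    have hposC : star x ⬝ᵥ (D *ᵥ x) = ((‖zj‖ ^ 2 * f i + ‖zi‖ ^ 2 * f j : ℝ) : ℂ) := by
      rw [hx, Matrix.mulVec_sub, Matrix.mulVec_smul, Matrix.mulVec_smul, hDu i, hDu j]
      have hstar : star (zj • u i - zi • u j)
          = star zj • star (u i) - star zi • star (u j) := by
        ext a; simp [Pi.star_apply, star_smul]
      rw [hstar]
      simp only [sub_dotProduct, dotProduct_sub, smul_dotProduct,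
        dotProduct_smul, smul_eq_mul]
      simp only [hON]
      simp only [hij, Ne.symm hij, if_true, if_false, eq_self_iff_true, if_pos rfl]
      have szj := star_mul_self_complex zj
      have szi := star_mul_self_complex zi
      push_cast at szj szi ⊢
      linear_combination ((f i : ℝ):ℂ) * szj + ((f j : ℝ):ℂ) * szi
    have hpos : (star x ⬝ᵥ (D *ᵥ x)).re = ‖zj‖ ^ 2 * f i + ‖zi‖ ^ 2 * f j := by
      rw [hposC]; exact Complex.ofReal_re _
    have hgt : 0 < (star x ⬝ᵥ (D *ᵥ x)).re := by
      rw [hpos]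
      have h1 : 0 < ‖zj‖ ^ 2 := pow_pos (norm_pos_iff.mpr hzj) 2
      have h2 : 0 < ‖zi‖ ^ 2 := pow_pos (norm_pos_iff.mpr hzi) 2
      have h3 : 0 ≤ ‖zj‖ ^ 2 * f i := mul_nonneg h1.le hfi.le
      nlinarith [mul_pos h1 hfi, mul_pos h2 hfj]
    linarith
  -- sum of eigenvalues = 0
  have hsum0 : ∑ i, f i = 0 := by
    have htr : D.trace = 0 := by
      rw [hDdef]
      have : ∀ i, M i i = 0 := by
        intro i
        simp only [hM, Matrix.sub_apply, Matrix.vecMulVec_apply, Pi.star_apply,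
          Matrix.diagonal_apply_eq]
        rw [mul_comm, star_mul_self_complex]
        push_cast; ring
      rw [Matrix.trace]
      simp only [Matrix.diag_apply, Matrix.smul_apply, ← hM, this, smul_zero]
      simp
    have := sum_eig_eq_trace D h
    rw [htr] at this
    exact_mod_cast this
  -- conclude
  have hmax : ∑ i, max (f i) 0 ≤ c' := by
    by_cases hex : ∃ i, 0 < f i
    · obtain ⟨i0, hi0⟩ := hex
      have : ∑ i, max (f i) 0 = f i0 := by
        rw [Finset.sum_eq_single i0]
        · exact max_eq_left hi0.le
        · intro j _ hj
          rcases le_or_gt (f j) 0 with hle | hgt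
          · exact max_eq_right hle
          · exact (hsingle j i0 hj hgt hi0).elim
        · intro habs; exact absurd (Finset.mem_univ i0) habs
      rw [this]
      exact hfle i0
    · push_neg at hex
      have : ∑ i, max (f i) 0 = 0 := Finset.sum_eq_zero fun i _ => max_eq_right (hex i)
      rw [this]; exact hc'0
  have habs : ∑ i, |f i| = 2 * ∑ i, max (f i) 0 := by
    calc ∑ i, |f i| = ∑ i, (2 * max (f i) 0 - f i) :=
          Finset.sum_congr rfl fun i _ => abs_eq_two_mul_max (f i)
      _ = 2 * ∑ i, max (f i) 0 - ∑ i, f i := by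
          rw [Finset.sum_sub_distrib, Finset.mul_sum]
      _ = 2 * ∑ i, max (f i) 0 := by rw [hsum0, sub_zero]
  calc (1/2) * ∑ i, |f i| = ∑ i, max (f i) 0 := by rw [habs]; ring
    _ ≤ c' := hmax

end Aux

/-- for any unit vector `v ∈ ℂ^d` and `1 ≤ k ≤ d` there exists a state in
the convex hull of rank-one projections onto `k`-sparse unit vectors whose trace distance
to `vv†` is at most `1 − k/d`. -/
theorem stmt15 (d k : ℕ) (hk : 1 ≤ k) (hkd : k ≤ d)
    (v : Fin d → ℂ) (hv : ∑ i, ‖v i‖ ^ 2 = 1) :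
    ∃ σ ∈ convexHull ℝ
        {A : Matrix (Fin d) (Fin d) ℂ | ∃ w : Fin d → ℂ,
          (∑ i, ‖w i‖ ^ 2 = 1) ∧ Set.ncard {i | w i ≠ 0} ≤ k ∧
            A = Matrix.vecMulVec w (star w)},
      ∃ h : (Matrix.vecMulVec v (star v) - σ).IsHermitian,
        (1 / 2) * ∑ i, |h.eigenvalues i| ≤ 1 - (k : ℝ) / d := by
  classical
  have hd : 0 < d := lt_of_lt_of_le hk hkd
  set lam : ℝ := ((k : ℝ) - 1) / ((d : ℝ) - 1) with hlam
  set mu : ℝ := 1 - lam with hmudef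
  set M : Matrix (Fin d) (Fin d) ℂ :=
    Matrix.vecMulVec v (star v) - Matrix.diagonal (fun i => (‖v i‖ ^ 2 : ℂ)) with hM
  set σ : Matrix (Fin d) (Fin d) ℂ := Matrix.vecMulVec v (star v) - (mu : ℂ) • M with hσ
  -- basic facts about lam, mu
  have hlam0 : 0 ≤ lam := by
    rcases eq_or_lt_of_le (Nat.one_le_iff_ne_zero.mpr hd.ne' : 1 ≤ d) with h1 | h2
    · have : (d : ℝ) = 1 := by exact_mod_cast h1.symm
      have hk1 : k = 1 := le_antisymm (h1 ▸ hkd) hk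
      rw [hlam, hk1, this]
      norm_num
    · have h2r : (1:ℝ) < d := by exact_mod_cast h2
      have hkr : (1:ℝ) ≤ k := by exact_mod_cast hk
      apply div_nonneg <;> linarith
  have hlam1 : lam ≤ 1 := by
    rcases eq_or_lt_of_le (Nat.one_le_iff_ne_zero.mpr hd.ne' : 1 ≤ d) with h1 | h2
    · have : (d : ℝ) = 1 := by exact_mod_cast h1.symm
      have hk1 : k = 1 := le_antisymm (h1 ▸ hkd) hk
      rw [hlam, hk1, this]
      norm_num
    · have h2r : (1:ℝ) < d := by exact_mod_cast h2
      have hkr : (k:ℝ) ≤ d := by exact_mod_cast hkd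
      rw [hlam, div_le_one (by linarith)]
      linarith
  have hmu0 : 0 ≤ mu := by rw [hmudef]; linarith
  have hmuc : mu * (1 - 1 / d) = 1 - (k : ℝ) / d := by
    rcases eq_or_lt_of_le (Nat.one_le_iff_ne_zero.mpr hd.ne' : 1 ≤ d) with h1 | h2
    · have hd1 : (d : ℝ) = 1 := by exact_mod_cast h1.symm
      have hk1 : k = 1 := le_antisymm (h1 ▸ hkd) hk
      rw [hmudef, hlam, hd1, hk1]
      norm_num
    · have h2r : (1:ℝ) < d := by exact_mod_cast h2
      have hd0 : (d:ℝ) ≠ 0 := by linarith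
      have hd1 : (d:ℝ) - 1 ≠ 0 := by intro h0; linarith
      rw [hmudef, hlam]
      field_simp
      ring
  -- the eigenvalue part
  have hDdef : Matrix.vecMulVec v (star v) - σ = (mu : ℂ) • M := by
    rw [hσ]; abel
  have hherm : (Matrix.vecMulVec v (star v) - σ).IsHermitian := by
    rw [hDdef]
    have hMh : M.IsHermitian := herm_M v
    unfold Matrix.IsHermitian
    rw [Matrix.conjTranspose_smul, hMh.eq]
    congr 1
    exact Complex.conj_ofReal mu
  refine ⟨σ, ?_, hherm, eig_bound d k hk hkd v hv mu hmu0 hmuc _ hDdef hherm⟩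
  -- MEMBERSHIP
  have hi0 : (0:ℕ) < d := hd
  set i0 : Fin d := ⟨0, hd⟩ with hi0def
  set p : Fin d → ℝ := fun a => ‖v a‖ ^ 2 with hp
  set Pk : Finset (Finset (Fin d)) := Finset.univ.powersetCard k with hPk
  set coef : ℝ := d / (k * (d.choose k)) with hcoef
  set nn : Finset (Fin d) → ℝ := fun S => ∑ a ∈ S, p a with hnn
  set wgt : Finset (Fin d) → ℝ := fun S => coef * nn S with hwgt
  set wvec : Finset (Fin d) → Fin d → ℂ :=
    fun S a => if a ∈ S then v a / (Real.sqrt (nn S) : ℂ) else 0 with hwvec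
  set zvec : Finset (Fin d) → Fin d → ℂ :=
    fun S => if nn S = 0 then Pi.single i0 1 else wvec S with hzvec
  set zmat : Finset (Fin d) → Matrix (Fin d) (Fin d) ℂ :=
    fun S => Matrix.vecMulVec (zvec S) (star (zvec S)) with hzmat
  have hkne : (k:ℝ) ≠ 0 := by positivity
  have hchoose_pos : 0 < d.choose k := Nat.choose_pos hkd
  have hchoose_ne : ((d.choose k : ℝ)) ≠ 0 := by positivity
  have hcoef0 : 0 ≤ coef := by rw [hcoef]; positivity
  have hp0 : ∀ a, 0 ≤ p a := fun a => sq_nonneg _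
  have hnn0 : ∀ S, 0 ≤ nn S := fun S => Finset.sum_nonneg fun a _ => hp0 a
  -- nat identities
  have natB : d * (d-1).choose (k-1) = d.choose k * k := by
    have h := Nat.add_one_mul_choose_eq (d-1) (k-1)
    rwa [show d-1+1 = d by omega, show k-1+1 = k by omega] at h
  have hR1 : coef * ((d-1).choose (k-1) : ℝ) = 1 := by
    rw [hcoef]
    field_simp
    exact_mod_cast natB.trans (Nat.mul_comm _ _)
  -- counting
  have hcount1 : ∀ a : Fin d, (Pk.filter (fun S => a ∈ S)).card = (d-1).choose (k-1) := by
    intro a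
    have h := count_supersets Finset.univ {a} (Finset.subset_univ _) k
      (by simpa using hk)
    rw [Finset.card_singleton, Finset.card_univ, Fintype.card_fin] at h
    rw [← h, hPk]
    refine congrArg Finset.card ?_
    apply Finset.filter_congr
    intro S _
    simp [Finset.singleton_subset_iff]
  have hcount2 : ∀ a b : Fin d, a ≠ b →
      ((Pk.filter (fun S => a ∈ S ∧ b ∈ S)).card : ℝ) * coef = lam := by
    intro a b hab
    rcases eq_or_lt_of_le hk with hk1 | hk2
    · -- k = 1 : count is 0 and lam = 0
      have hfe : Pk.filter (fun S => a ∈ S ∧ b ∈ S) = ∅ := by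
        rw [Finset.eq_empty_iff_forall_notMem]
        intro S hS
        simp only [Finset.mem_filter, hPk, Finset.mem_powersetCard] at hS
        have h2 : ({a, b} : Finset (Fin d)) ⊆ S := by
          intro x hx
          simp only [Finset.mem_insert, Finset.mem_singleton] at hx
          rcases hx with rfl | rfl
          · exact hS.2.1
          · exact hS.2.2
        have h3 : ({a, b} : Finset (Fin d)).card = 2 := by
          rw [Finset.card_insert_of_notMem (by simpa using hab), Finset.card_singleton]
        have := Finset.card_le_card h2
        rw [h3, hS.1.2, ← hk1] at this
        omega
      have hlam_z : lam = 0 := by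
        rw [hlam, ← hk1]
        norm_num
      rw [hfe, hlam_z]
      simp
    · -- k ≥ 2, hence d ≥ 2
      have hd2 : 2 ≤ d := le_trans hk2 hkd
      have natA : (d-1) * (d-2).choose (k-2) = (d-1).choose (k-1) * (k-1) := by
        have h := Nat.add_one_mul_choose_eq (d-2) (k-2)
        rwa [show d-2+1 = d-1 by omega, show k-2+1 = k-1 by omega] at h
      have natC : d * (d-1) * (d-2).choose (k-2) = d.choose k * k * (k-1) := by
        calc d * (d-1) * (d-2).choose (k-2) = d * ((d-1) * (d-2).choose (k-2)) := by ring
          _ = d * ((d-1).choose (k-1) * (k-1)) := by rw [natA]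
          _ = (d * (d-1).choose (k-1)) * (k-1) := by ring
          _ = d.choose k * k * (k-1) := by rw [natB]
      have hcard : (Pk.filter (fun S => a ∈ S ∧ b ∈ S)).card = (d-2).choose (k-2) := by
        have h := count_supersets Finset.univ {a, b} (Finset.subset_univ _) k ?hcard2
        case hcard2 =>
          rw [Finset.card_insert_of_notMem (by simpa using hab), Finset.card_singleton]
          omega
        rw [Finset.card_insert_of_notMem (by simpa using hab), Finset.card_singleton,
          Finset.card_univ, Fintype.card_fin] at h
        rw [← h, hPk]
        refine congrArg Finset.card ?_
        apply Finset.filter_congr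
        intro S _
        constructor
        · intro hx
          intro x hxm
          simp only [Finset.mem_insert, Finset.mem_singleton] at hxm
          rcases hxm with rfl | rfl
          · exact hx.1
          · exact hx.2
        · intro hx
          exact ⟨hx (Finset.mem_insert_self _ _),
            hx (Finset.mem_insert_of_mem (Finset.mem_singleton_self _))⟩
      have e1 : ((d-1 : ℕ) : ℝ) = (d:ℝ) - 1 := by
        rw [Nat.cast_sub (by omega)]; norm_num
      have e2 : ((k-1 : ℕ) : ℝ) = (k:ℝ) - 1 := by
        rw [Nat.cast_sub (by omega)]; norm_num
      have natCr : (d:ℝ) * ((d:ℝ) - 1) * ((d-2).choose (k-2) : ℝ)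
          = (d.choose k : ℝ) * (k:ℝ) * ((k:ℝ) - 1) := by
        have hcast := congrArg (fun n : ℕ => (n:ℝ)) natC
        push_cast at hcast
        rw [e1, e2] at hcast
        linarith [hcast]
      have hd1ne : (d:ℝ) - 1 ≠ 0 := by
        have : (2:ℝ) ≤ d := by exact_mod_cast hd2
        intro h0; linarith
      rw [hcard, hcoef, hlam]
      field_simp
      linear_combination natCr
  -- total weight is 1
  have hsum_wgt : ∑ S ∈ Pk, wgt S = 1 := by
    rw [hwgt]
    simp only
    rw [← Finset.mul_sum]
    have hswap : ∑ S ∈ Pk, nn S = ∑ a : Fin d, ((Pk.filter (fun S => a ∈ S)).card : ℝ) * p a := by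
      rw [hnn]
      simp only
      have h1 : ∀ S ∈ Pk, ∑ a ∈ S, p a = ∑ a : Fin d, if a ∈ S then p a else 0 := by
        intro S _
        rw [Finset.sum_ite_mem, Finset.univ_inter]
      rw [Finset.sum_congr rfl h1, Finset.sum_comm]
      refine Finset.sum_congr rfl fun a _ => ?_
      rw [← Finset.sum_filter, Finset.sum_const, nsmul_eq_mul]
    rw [hswap]
    have h2 : ∀ a : Fin d, ((Pk.filter (fun S => a ∈ S)).card : ℝ) * p a
        = ((d-1).choose (k-1) : ℝ) * p a := fun a => by rw [hcount1 a]
    rw [Finset.sum_congr rfl fun a _ => h2 a, ← Finset.mul_sum, hv, mul_one]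
    linarith [hR1]
  -- membership of each generator
  have hzmem : ∀ S ∈ Pk, zmat S ∈
      {A : Matrix (Fin d) (Fin d) ℂ | ∃ w : Fin d → ℂ,
        (∑ i, ‖w i‖ ^ 2 = 1) ∧ Set.ncard {i | w i ≠ 0} ≤ k ∧
          A = Matrix.vecMulVec w (star w)} := by
    intro S hS
    refine ⟨zvec S, ?_, ?_, by rw [hzmat]⟩
    · -- norm 1
      by_cases hnS : nn S = 0
      · rw [hzvec]; simp only [if_pos hnS]
        have he : ∀ a : Fin d, ‖(Pi.single i0 1 : Fin d → ℂ) a‖ ^ 2 = if a = i0 then 1 else 0 := by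
          intro a
          by_cases ha : a = i0 <;> simp [Pi.single_apply, ha]
        rw [Finset.sum_congr rfl fun a _ => he a]
        simp
      · have hpos : 0 < nn S := lt_of_le_of_ne (hnn0 S) (Ne.symm hnS)
        rw [hzvec]; simp only [if_neg hnS]
        have he : ∀ a : Fin d, ‖wvec S a‖ ^ 2 = if a ∈ S then p a / nn S else 0 := by
          intro a
          rw [hwvec]
          by_cases ha : a ∈ S
          · simp only [if_pos ha]
            rw [norm_div, div_pow, Complex.norm_real, Real.norm_eq_abs,
              abs_of_nonneg (Real.sqrt_nonneg _), Real.sq_sqrt (hnn0 S)]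
          · simp [if_neg ha]
        rw [Finset.sum_congr rfl fun a _ => he a, Finset.sum_ite_mem, Finset.univ_inter,
          ← Finset.sum_div]
        have hns : (∑ a ∈ S, p a) = nn S := rfl
        rw [hns]
        exact div_self hnS
    · -- sparsity
      by_cases hnS : nn S = 0
      · rw [hzvec]; simp only [if_pos hnS]
        have he : {i : Fin d | (Pi.single i0 1 : Fin d → ℂ) i ≠ 0} = {i0} := by
          ext a
          by_cases ha : a = i0 <;> simp [Pi.single_apply, ha]
        rw [he, Set.ncard_singleton]
        exact hk
      · rw [hzvec]; simp only [if_neg hnS]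
        have hsub : {i : Fin d | wvec S i ≠ 0} ⊆ (S : Set (Fin d)) := by
          intro a ha
          simp only [Set.mem_setOf_eq, hwvec] at ha
          by_contra hns
          have hns' : a ∉ S := fun hmem => hns (Finset.mem_coe.mpr hmem)
          exact ha (by simp [if_neg hns'])
        have hcard : S.card = k := (Finset.mem_powersetCard.mp (hPk ▸ hS)).2
        calc {i : Fin d | wvec S i ≠ 0}.ncard ≤ (S : Set (Fin d)).ncard :=
              Set.ncard_le_ncard hsub (S.finite_toSet)
          _ = S.card := Set.ncard_coe_finset S
          _ = k := hcard
  -- σ equals the center of mass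
  have hident : ∑ S ∈ Pk, wgt S • zmat S = σ := by
    ext a b
    rw [Matrix.sum_apply]
    have hterm : ∀ S ∈ Pk, (wgt S • zmat S) a b
        = (coef : ℂ) * (if a ∈ S ∧ b ∈ S then v a * star (v b) else 0) := by
      intro S _
      rw [Matrix.smul_apply]
      by_cases hnS : nn S = 0
      · have hw0 : wgt S = coef * 0 := by rw [hwgt]; simp only; rw [hnS]
        rw [hw0, mul_zero, zero_smul]
        by_cases hab : a ∈ S ∧ b ∈ S
        · have hva : v a = 0 := by
            have h0 : p a = 0 := by
              have := (Finset.sum_eq_zero_iff_of_nonneg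
                (fun x (_ : x ∈ S) => hp0 x)).mp hnS a hab.1
              exact this
            have : ‖v a‖ = 0 := by
              rw [hp] at h0
              simpa [pow_eq_zero_iff] using h0
            exact norm_eq_zero.mp this
          rw [if_pos hab, hva, zero_mul, mul_zero]
        · rw [if_neg hab, mul_zero]
      · have hpos : 0 < nn S := lt_of_le_of_ne (hnn0 S) (Ne.symm hnS)
        have hz : zvec S = wvec S := by rw [hzvec]; simp only [if_neg hnS]
        rw [hzmat]
        simp only [hz, Matrix.vecMulVec_apply, Pi.star_apply]
        by_cases hab : a ∈ S ∧ b ∈ S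
        · rw [if_pos hab]
          rw [hwvec]
          simp only [if_pos hab.1, if_pos hab.2]
          have hsq : ((Real.sqrt (nn S) : ℂ)) * ((Real.sqrt (nn S) : ℂ)) = (nn S : ℂ) := by
            rw [← Complex.ofReal_mul, Real.mul_self_sqrt (hnn0 S)]
          have hstar : star ((v b) / ((Real.sqrt (nn S) : ℝ) : ℂ))
              = star (v b) / ((Real.sqrt (nn S) : ℝ) : ℂ) := by
            rw [star_div₀]
            congr 1
            exact Complex.conj_ofReal _
          rw [hstar]
          rw [div_mul_div_comm, hsq]
          have hnne : ((nn S : ℝ) : ℂ) ≠ 0 := by exact_mod_cast hnS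
          rw [Complex.real_smul]
          have hwgtS : ((wgt S : ℝ) : ℂ) = (coef : ℂ) * ((nn S : ℝ) : ℂ) := by
            rw [hwgt]; push_cast; ring
          rw [hwgtS]
          field_simp
        · push_neg at hab
          by_cases ha : a ∈ S
          · have hb : b ∉ S := hab ha
            rw [if_neg (by tauto), hwvec]
            simp [if_neg hb]
          · rw [if_neg (by tauto), hwvec]
            simp [if_neg ha]
    rw [Finset.sum_congr rfl hterm, ← Finset.mul_sum]
    rw [← Finset.sum_filter, Finset.sum_const, nsmul_eq_mul]
    rw [hσ, hM]
    simp only [Matrix.sub_apply, Matrix.smul_apply, Matrix.vecMulVec_apply, Pi.star_apply,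
      smul_eq_mul]
    by_cases hab : a = b
    · subst hab
      rw [Matrix.diagonal_apply_eq]
      have hfc : Pk.filter (fun S => a ∈ S ∧ a ∈ S) = Pk.filter (fun S => a ∈ S) :=
        Finset.filter_congr (fun S _ => by simp)
      rw [hfc, hcount1 a]
      have hpa : v a * star (v a) = ((‖v a‖:ℝ) : ℂ)^2 := by
        have hh := star_mul_self_complex (v a)
        push_cast at hh
        rw [mul_comm]
        exact hh
      have h1C : (coef : ℂ) * (((d-1).choose (k-1) : ℕ) : ℂ) = 1 := by
        have := hR1
        push_cast
        exact_mod_cast this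
      linear_combination (v a * star (v a)) * h1C + ((mu:ℝ):ℂ) * hpa
    · rw [Matrix.diagonal_apply_ne _ hab]
      have hcl : ((Pk.filter (fun S => a ∈ S ∧ b ∈ S)).card : ℂ) * (coef:ℂ) = ((lam:ℝ):ℂ) := by
        exact_mod_cast hcount2 a b hab
      have hmuL : ((mu:ℝ):ℂ) = 1 - ((lam:ℝ):ℂ) := by
        rw [hmudef]; push_cast; ring
      linear_combination (v a * star (v b)) * hcl + (v a * star (v b)) * hmuL
  have hcm := Finset.centerMass_mem_convexHull Pk
    (fun S _ => mul_nonneg hcoef0 (hnn0 S)) (by rw [hsum_wgt]; norm_num) hzmem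
  rwa [Finset.centerMass_eq_of_sum_1 _ _ hsum_wgt, hident] at hcm
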